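/- (Gradient dominance of the squared chordal distance, Lemma 4 part 2.) Let U, Û ∈ ℝ^{n×d} be orthonormal matrices and let 0 ≤ r < 1 be such that tr(Û^⊤ P_U^⊥ Û) ≤ r². Then 4 tr(P_U P_Û P_U^⊥ P_Û) ≥ 4(1 − r²) · tr(Û^⊤ P_U^⊥ Û). (The left-hand side is the squared Frobenius norm of the Riemannian gradient −2 P_Û^⊥ P_U Û of the squared chordal distance.) -/

import Mathlib

open Matrix

section Aux

variable {m k : ℕ}

lemma psd_trace_nonneg {M : Matrix (Fin m) (Fin m) ℝ} (h : M.PosSemidef) :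
    0 ≤ M.trace := by
  rw [Matrix.trace]
  apply Finset.sum_nonneg
  intro i _
  have := h.dotProduct_mulVec_nonneg (Pi.single i 1)
  simpa [Matrix.mulVec, dotProduct, Pi.single_apply] using this

lemma quad_form_le (E : Matrix (Fin k) (Fin m) ℝ) (x : Fin m → ℝ) :
    dotProduct x ((Eᵀ * E) *ᵥ x) ≤ (Eᵀ * E).trace * dotProduct x x := by
  have h1 : dotProduct x ((Eᵀ * E) *ᵥ x) = ∑ i, (∑ j, E i j * x j) ^ 2 := by
    rw [← Matrix.mulVec_mulVec, Matrix.dotProduct_mulVec, Matrix.vecMul_transpose]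
    simp [dotProduct, Matrix.mulVec, sq]
  have h2 : (Eᵀ * E).trace = ∑ i, ∑ j, E i j ^ 2 := by
    simp [Matrix.trace, Matrix.mul_apply, Matrix.diag, sq]
    rw [Finset.sum_comm]
  rw [h1, h2, Finset.sum_mul]
  apply Finset.sum_le_sum
  intro i _
  have := Finset.sum_mul_sq_le_sq_mul_sq Finset.univ (fun j => E i j) x
  simpa [dotProduct, sq] using this

end Aux

section Aux2

variable {m k : ℕ}

lemma psd_smul_one_sub (E : Matrix (Fin k) (Fin m) ℝ) (c : ℝ)
    (h : (Eᵀ * E).trace ≤ c) : (c • (1 : Matrix (Fin m) (Fin m) ℝ) - Eᵀ * E).PosSemidef := by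
  refine Matrix.PosSemidef.of_dotProduct_mulVec_nonneg ?_ ?_
  · show _ = _
    rw [Matrix.conjTranspose_eq_transpose_of_trivial, Matrix.transpose_sub,
      Matrix.transpose_smul, Matrix.transpose_one, Matrix.transpose_mul,
      Matrix.transpose_transpose]
  · intro x
    have hq := quad_form_le E x
    have hxx : 0 ≤ dotProduct x x := by
      simp [dotProduct]
      exact Finset.sum_nonneg fun i _ => mul_self_nonneg _
    have : dotProduct x ((Eᵀ * E) *ᵥ x) ≤ c * dotProduct x x :=
      hq.trans (mul_le_mul_of_nonneg_right h hxx)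
    simp only [star_trivial, Matrix.sub_mulVec, Matrix.smul_mulVec, Matrix.one_mulVec,
      dotProduct_sub, dotProduct_smul, smul_eq_mul]
    linarith

lemma trace_mul_psd_nonneg (E : Matrix (Fin k) (Fin m) ℝ)
    {M : Matrix (Fin m) (Fin m) ℝ} (hM : M.PosSemidef) :
    0 ≤ (M * (Eᵀ * E)).trace := by
  have hpsd : (E * M * Eᵀ).PosSemidef := by
    have := hM.mul_mul_conjTranspose_same E
    simpa [Matrix.conjTranspose_eq_transpose_of_trivial] using this
  have := psd_trace_nonneg hpsd
  rw [Matrix.trace_mul_comm]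
  rw [Matrix.trace_mul_cycle] at this
  exact this

end Aux2

/-- Gradient dominance of the squared chordal distance, Lemma 4 part 2:
Let `U, Û ∈ ℝ^{n×d}` be orthonormal matrices and let `0 ≤ r < 1` be such that
`tr(Ûᵀ P_U^⊥ Û) ≤ r²`. Then
`4 tr(P_U P_Û P_U^⊥ P_Û) ≥ 4(1 − r²) tr(Ûᵀ P_U^⊥ Û)`.
(The left-hand side is the squared Frobenius norm of the Riemannian gradient
`−2 P_Û^⊥ P_U Û` of the squared chordal distance.) -/
theorem stmt12 {n d : ℕ} (U Uhat : Matrix (Fin n) (Fin d) ℝ)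
    (hU : Uᵀ * U = 1) (hUhat : Uhatᵀ * Uhat = 1)
    (r : ℝ) (hr0 : 0 ≤ r) (hr1 : r < 1)
    (hdist : Matrix.trace (Uhatᵀ * (1 - U * Uᵀ) * Uhat) ≤ r ^ 2) :
    4 * Matrix.trace ((U * Uᵀ) * (Uhat * Uhatᵀ) * (1 - U * Uᵀ) * (Uhat * Uhatᵀ))
      ≥ 4 * (1 - r ^ 2) * Matrix.trace (Uhatᵀ * (1 - U * Uᵀ) * Uhat) := by
  have hU' : ∀ {p : ℕ} (X : Matrix (Fin d) (Fin p) ℝ), Uᵀ * (U * X) = X := by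
    intro p X; rw [← Matrix.mul_assoc, hU, Matrix.one_mul]
  have hUhat' : ∀ {p : ℕ} (X : Matrix (Fin d) (Fin p) ℝ), Uhatᵀ * (Uhat * X) = X := by
    intro p X; rw [← Matrix.mul_assoc, hUhat, Matrix.one_mul]
  set D := Uhatᵀ * (1 - U * Uᵀ) * Uhat with hD
  set E := (1 - U * Uᵀ) * Uhat with hEdef
  -- D = Eᵀ * E
  have hE : Eᵀ * E = D := by
    rw [hEdef, hD, Matrix.transpose_mul, Matrix.transpose_sub, Matrix.transpose_one,
      Matrix.transpose_mul, Matrix.transpose_transpose]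
    simp only [Matrix.mul_sub, Matrix.sub_mul, Matrix.mul_one, Matrix.one_mul,
      Matrix.mul_assoc, hU', hUhat']
    abel
  -- the PSD middle matrix
  have hMpsd : (r ^ 2 • (1 : Matrix (Fin d) (Fin d) ℝ) - D).PosSemidef := by
    rw [← hE]
    exact psd_smul_one_sub E (r ^ 2) (by rw [hE]; exact hdist)
  have hkey : 0 ≤ ((r ^ 2 • (1 : Matrix (Fin d) (Fin d) ℝ) - D) * (Eᵀ * E)).trace :=
    trace_mul_psd_nonneg E hMpsd
  rw [hE] at hkey
  have hexp : ((r ^ 2 • (1 : Matrix (Fin d) (Fin d) ℝ) - D) * D).trace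
      = r ^ 2 * D.trace - (D * D).trace := by
    rw [Matrix.sub_mul, Matrix.smul_mul, Matrix.one_mul, Matrix.trace_sub, Matrix.trace_smul,
      smul_eq_mul]
  rw [hexp] at hkey
  -- trace identity
  have rot1 : Matrix.trace (Uhatᵀ * (U * (Uᵀ * Uhat)))
      = Matrix.trace (U * (Uᵀ * (Uhat * Uhatᵀ))) := by
    rw [Matrix.trace_mul_comm]; simp [Matrix.mul_assoc]
  have rot2 : Matrix.trace (Uhatᵀ * (U * (Uᵀ * (Uhat * (Uhatᵀ * (U * (Uᵀ * Uhat)))))))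
      = Matrix.trace (U * (Uᵀ * (Uhat * (Uhatᵀ * (U * (Uᵀ * (Uhat * Uhatᵀ))))))) := by
    rw [Matrix.trace_mul_comm]; simp [Matrix.mul_assoc]
  have key : Matrix.trace ((U * Uᵀ) * (Uhat * Uhatᵀ) * (1 - U * Uᵀ) * (Uhat * Uhatᵀ))
      = D.trace - (D * D).trace := by
    rw [hD]
    simp only [Matrix.mul_sub, Matrix.sub_mul, Matrix.mul_one, Matrix.one_mul,
      Matrix.trace_sub, Matrix.mul_assoc, hU', hUhat', hUhat]
    rw [rot1, rot2]
    ring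
  rw [key]
  linarith
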